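/- Fix a positive integer d and x, ε ∈ (0,1). Set t₁ = xε/(1 − x(1−ε)), and for k ∈ [0,1] define N₁(k) = 1 − k(1−x), N₂(k) = (1−ε)x + kεx and ψ(k) = t₁·N₁(k)^{d+1} + (1−t₁)·N₂(k)^{d+1}. Then ψ is strictly decreasing on [0,1]. Consequently, the welfare improvement k ↦ ψ(0) − ψ(k) is strictly increasing, and the ratio k ↦ (ψ(0) − ψ(1))/(ψ(0) − ψ(k)) is monotonically decreasing on (0,1]. -/

import Mathlib

/-- In the step-demand monomial model, the social cost
`ψ(k) = t₁·N₁(k)^{d+1} + (1−t₁)·N₂(k)^{d+1}` is strictly decreasing on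
`[0,1]`; consequently the welfare improvement `k ↦ ψ(0) − ψ(k)` is strictly
increasing on `[0,1]` and the ratio `k ↦ (ψ(0) − ψ(1))/(ψ(0) − ψ(k))` is
monotonically decreasing on `(0,1]`. -/
theorem stmt9 (d : ℕ) (hd : 0 < d)
    (x ε : ℝ) (hx : x ∈ Set.Ioo (0 : ℝ) 1) (hε : ε ∈ Set.Ioo (0 : ℝ) 1)
    (t₁ : ℝ) (ht₁ : t₁ = x * ε / (1 - x * (1 - ε)))
    (N₁ N₂ ψ : ℝ → ℝ)
    (hN₁ : ∀ k, N₁ k = 1 - k * (1 - x))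
    (hN₂ : ∀ k, N₂ k = (1 - ε) * x + k * ε * x)
    (hψ : ∀ k, ψ k = t₁ * (N₁ k) ^ (d + 1) + (1 - t₁) * (N₂ k) ^ (d + 1)) :
    StrictAntiOn ψ (Set.Icc 0 1) ∧
    StrictMonoOn (fun k => ψ 0 - ψ k) (Set.Icc 0 1) ∧
    AntitoneOn (fun k => (ψ 0 - ψ 1) / (ψ 0 - ψ k)) (Set.Ioc 0 1) := by
  obtain ⟨hx0, hx1⟩ := hx
  obtain ⟨hε0, hε1⟩ := hε
  have hD : 0 < 1 - x * (1 - ε) := by nlinarith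
  have ht1pos : 0 < t₁ := by rw [ht₁]; positivity
  have ht1lt : t₁ < 1 := by
    rw [ht₁, div_lt_one hD]; nlinarith
  have hkey : t₁ * (1 - x) = (1 - t₁) * (ε * x) := by
    rw [ht₁]; field_simp; ring
  have hψfun : ψ = fun k => t₁ * (1 - k * (1 - x)) ^ (d + 1)
      + (1 - t₁) * ((1 - ε) * x + k * ε * x) ^ (d + 1) := by
    funext k; rw [hψ, hN₁, hN₂]
  have hanti : StrictAntiOn ψ (Set.Icc 0 1) := by
    rw [hψfun]
    apply strictAntiOn_of_deriv_neg (convex_Icc 0 1)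
    · fun_prop
    · intro k hk
      rw [interior_Icc] at hk
      obtain ⟨hk0, hk1⟩ := hk
      set A : ℝ := 1 - k * (1 - x) with hA
      set B : ℝ := (1 - ε) * x + k * ε * x with hB
      have h1 : HasDerivAt (fun k : ℝ => 1 - k * (1 - x)) (-(1 - x)) k := by
        simpa using ((hasDerivAt_id k).mul_const (1 - x)).const_sub 1
      have h2 : HasDerivAt (fun k : ℝ => (1 - ε) * x + k * ε * x) (ε * x) k := by
        simpa using (((hasDerivAt_id k).mul_const ε).mul_const x).const_add ((1 - ε) * x)
      have hderiv : HasDerivAt (fun k : ℝ => t₁ * (1 - k * (1 - x)) ^ (d + 1)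
          + (1 - t₁) * ((1 - ε) * x + k * ε * x) ^ (d + 1))
          (t₁ * ((↑(d + 1) : ℝ) * A ^ d * (-(1 - x)))
            + (1 - t₁) * ((↑(d + 1) : ℝ) * B ^ d * (ε * x))) k := by
        have e1 := (h1.pow (d + 1)).const_mul t₁
        have e2 := (h2.pow (d + 1)).const_mul (1 - t₁)
        have e := e1.add e2
        rw [Nat.add_sub_cancel] at e
        exact e
      rw [hderiv.deriv]
      have hB0 : 0 ≤ B := by
        rw [hB]; nlinarith [mul_pos (mul_pos hk0 hε0) hx0, mul_pos hε0 hx0]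
      have hBA : B < A := by rw [hA, hB]; nlinarith
      have hpow : B ^ d < A ^ d := pow_lt_pow_left₀ hBA hB0 hd.ne'
      have hc : 0 < ((↑(d + 1) : ℝ)) * (t₁ * (1 - x)) := by
        have : (0:ℝ) < 1 - x := by linarith
        positivity
      have heq : t₁ * ((↑(d + 1) : ℝ) * A ^ d * (-(1 - x)))
          + (1 - t₁) * ((↑(d + 1) : ℝ) * B ^ d * (ε * x))
          = ((↑(d + 1) : ℝ)) * (t₁ * (1 - x)) * (B ^ d - A ^ d) := by
        linear_combination (-((↑(d + 1) : ℝ) * B ^ d)) * hkey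
      rw [heq]
      exact mul_neg_of_pos_of_neg hc (by linarith)
  refine ⟨hanti, ?_, ?_⟩
  · intro a ha b hb hab
    have := hanti ha hb hab
    simp only
    linarith
  · intro a ha b hb hab
    simp only
    have ha' : a ∈ Set.Icc (0:ℝ) 1 := ⟨ha.1.le, ha.2⟩
    have hb' : b ∈ Set.Icc (0:ℝ) 1 := ⟨hb.1.le, hb.2⟩
    have h0 : (0:ℝ) ∈ Set.Icc (0:ℝ) 1 := by norm_num
    have h1 : (1:ℝ) ∈ Set.Icc (0:ℝ) 1 := by norm_num
    have hnum : 0 < ψ 0 - ψ 1 := by have := hanti h0 h1 one_pos; linarith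
    have hda : 0 < ψ 0 - ψ a := by have := hanti h0 ha' ha.1; linarith
    have hab' : ψ 0 - ψ a ≤ ψ 0 - ψ b := by
      rcases eq_or_lt_of_le hab with h | h
      · rw [h]
      · have := hanti ha' hb' h; linarith
    gcongr
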